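/- Let Φ be a Horn formula and ρ ⊆ V_Φ a set of variables assigned true. Then every unit literal produced by unit propagation when computing the closure of Φ⁺|_ρ is a positive literal, and this closure never produces the empty clause (i.e., (Φ⁺|_ρ)* ≠ ⊥). -/
import Mathlib


abbrev Lit (V : Type) := V × Bool
abbrev Clause (V : Type) := Finset (Lit V)
abbrev CnfForm (V : Type) := Finset (Clause V)

variable {V : Type} [DecidableEq V]

/-- Restriction Φ|_ρ : remove clauses containing a literal of ρ, and delete from the
remaining clauses every literal whose complement is in ρ. -/
def restrict (Φ : CnfForm V) (ρ : Finset (Lit V)) : CnfForm V :=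
  (Φ.filter fun c => ∀ l ∈ ρ, l ∉ c).image fun c => c.filter fun l => (l.1, !l.2) ∉ ρ

/-- Unit propagation derives the literal `l` from `Φ` : repeatedly assigning the
literals of unit clauses true and simplifying eventually produces the unit clause
`{l}` or the empty clause. -/
inductive UPDerives : CnfForm V → Lit V → Prop
  | unit {Φ : CnfForm V} {l : Lit V} : ({l} : Clause V) ∈ Φ → UPDerives Φ l
  | bot {Φ : CnfForm V} {l : Lit V} : (∅ : Clause V) ∈ Φ → UPDerives Φ l
  | step {Φ : CnfForm V} {l : Lit V} (m : Lit V) : ({m} : Clause V) ∈ Φ →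
      UPDerives (restrict Φ {m}) l → UPDerives Φ l

/-- Unit propagation derives the empty clause from `Φ`, i.e. `Φ* = ⊥`. -/
inductive UPEmpty : CnfForm V → Prop
  | bot {Φ : CnfForm V} : (∅ : Clause V) ∈ Φ → UPEmpty Φ
  | step {Φ : CnfForm V} (m : Lit V) : ({m} : Clause V) ∈ Φ → UPEmpty (restrict Φ {m}) → UPEmpty Φ

/-- `UPReach Φ Ψ` : the formula `Ψ` is obtained from `Φ` by a sequence of
unit-propagation steps. -/
inductive UPReach : CnfForm V → CnfForm V → Prop
  | refl (Φ : CnfForm V) : UPReach Φ Φ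
  | step {Φ Ψ : CnfForm V} (m : Lit V) : UPReach Φ Ψ → ({m} : Clause V) ∈ Ψ →
      UPReach Φ (restrict Ψ {m})

/-- The set of variables occurring in `Φ`. -/
def varsOf (Φ : CnfForm V) : Finset V := Φ.biUnion fun c => c.image Prod.fst

/-- A Horn formula: every clause contains at most one positive literal. -/
def IsHorn (Φ : CnfForm V) : Prop := ∀ c ∈ Φ, (c.filter fun l => l.2 = true).card ≤ 1

/-- `Φ⁻` : the negative clauses of `Φ` (no positive literal). -/
def negClauses (Φ : CnfForm V) : CnfForm V := Φ.filter fun c => ∀ l ∈ c, l.2 = false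

/-- `Φ⁺` : the clauses of `Φ` with exactly one positive literal. -/
def posPart (Φ : CnfForm V) : CnfForm V :=
  Φ.filter fun c => (c.filter fun l => l.2 = true).card = 1


lemma restrict_defOne {V : Type} [DecidableEq V] (Φ : CnfForm V) (ρ : Finset (Lit V))
    (hρ : ∀ m ∈ ρ, m.2 = true)
    (hΦ : ∀ c ∈ Φ, (c.filter fun l => l.2 = true).card = 1) :
    ∀ c ∈ restrict Φ ρ, (c.filter fun l => l.2 = true).card = 1 := by
  intro c hc
  rw [restrict, Finset.mem_image] at hc
  obtain ⟨d, hd, rfl⟩ := hc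
  rw [Finset.mem_filter] at hd
  have : ((d.filter fun l => (l.1, !l.2) ∉ ρ).filter fun l => l.2 = true)
      = d.filter fun l => l.2 = true := by
    rw [Finset.filter_filter]
    apply Finset.filter_congr
    intro l _
    constructor
    · rintro ⟨_, h⟩; exact h
    · intro h
      refine ⟨fun hmem => ?_, h⟩
      have := hρ _ hmem
      simp [h] at this
  rw [this]
  exact hΦ d hd.1

/-- For a Horn formula `Φ` and `ρ ⊆ V_Φ` a set of variables assigned
true, every unit literal produced while computing the closure of `Φ⁺|_ρ` is positive,
and the empty clause is never produced. -/
theorem stmt1 {V : Type} [DecidableEq V] (Φ : CnfForm V) (ρ : Finset V)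
    (hHorn : IsHorn Φ) (hρ : ρ ⊆ varsOf Φ) :
    ∀ Ψ : CnfForm V, UPReach (restrict (posPart Φ) (ρ.image fun x => (x, true))) Ψ →
      (∀ l : Lit V, ({l} : Clause V) ∈ Ψ → l.2 = true) ∧ (∅ : Clause V) ∉ Ψ := by
  intro Ψ hreach
  have inv : ∀ c ∈ Ψ, (c.filter fun l => l.2 = true).card = 1 := by
    induction hreach with
    | refl =>
      apply restrict_defOne
      · intro m hm
        rw [Finset.mem_image] at hm
        obtain ⟨x, _, rfl⟩ := hm
        rfl
      · intro c hc
        exact (Finset.mem_filter.mp hc).2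
    | step m _ hm ih =>
      apply restrict_defOne
      · intro m' hm'
        rw [Finset.mem_singleton] at hm'
        rw [hm']
        have := ih _ hm
        rw [Finset.filter_singleton] at this
        by_contra hneg
        simp only [hneg, if_false] at this
        exact one_ne_zero this.symm
      · exact ih
  constructor
  · intro l hl
    have := inv _ hl
    rw [Finset.filter_singleton] at this
    by_contra hneg
    simp [hneg] at this
  · intro h
    have := inv _ h
    simp at this
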